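/- For every k ≥ 1, aw(P_3 □ P_{2k}, 3) = 4; that is, every exact 4-coloring of the grid P_3 □ P_{2k} contains a rainbow 3-AP, while some exact 3-coloring does not. -/

import Mathlib

open SimpleGraph

/-- `v` lists the vertices of a `k`-term arithmetic progression in `G`:
consecutive vertices are at a common distance `d`. -/
def IsAPIn {V : Type*} (G : SimpleGraph V) (k : ℕ) (v : Fin k → V) : Prop :=
  ∃ d : ℕ, ∀ (i : ℕ) (h : i + 1 < k),
    G.dist (v ⟨i, by omega⟩) (v ⟨i + 1, h⟩) = d

/-- The coloring `c` admits a rainbow `k`-AP in `G`: a `k`-AP whose vertices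
are pairwise distinct and receive pairwise distinct colors. -/
def HasRainbowAP {V α : Type*} (G : SimpleGraph V) (k : ℕ) (c : V → α) : Prop :=
  ∃ v : Fin k → V, IsAPIn G k v ∧ Function.Injective (c ∘ v)

/-- The anti-van der Waerden number `aw(G,k)`: the least positive `r` such that
every exact `r`-coloring of `G` contains a rainbow `k`-AP.  (For `r = |V(G)|+1`
there is no surjection onto `r` colors, so the defining set is nonempty and
`aw(G,k) ≤ |V(G)|+1` automatically, matching the convention.) -/
noncomputable def aw {V : Type*} [Fintype V] (G : SimpleGraph V) (k : ℕ) : ℕ :=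
  sInf {r : ℕ | 0 < r ∧ ∀ c : V → Fin r, Function.Surjective c → HasRainbowAP G k c}

/-- walk of exact taxicab length going up -/
lemma pathWalk_up (n : ℕ) : ∀ (d : ℕ) (i j : Fin n), i.val + d = j.val →
    ∃ w : (pathGraph n).Walk i j, w.length = d := by
  intro d
  induction d with
  | zero => intro i j h; obtain rfl : i = j := Fin.ext (by omega); exact ⟨.nil, rfl⟩
  | succ d ih =>
    intro i j h
    have hlt : i.val + 1 < n := by have := j.isLt; omega
    have hadj : (pathGraph n).Adj i ⟨i.val + 1, hlt⟩ := pathGraph_adj.mpr (Or.inl rfl)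
    obtain ⟨w, hw⟩ := ih ⟨i.val + 1, hlt⟩ j (by simp; omega)
    exact ⟨.cons hadj w, by simp [hw]⟩

lemma pathWalk_exists (n : ℕ) (i j : Fin n) :
    ∃ w : (pathGraph n).Walk i j, w.length = Nat.dist i.val j.val := by
  rcases le_total i.val j.val with h | h
  · obtain ⟨w, hw⟩ := pathWalk_up n (j.val - i.val) i j (by omega)
    exact ⟨w, by rw [hw, Nat.dist_eq_sub_of_le h]⟩
  · obtain ⟨w, hw⟩ := pathWalk_up n (i.val - j.val) j i (by omega)
    exact ⟨w.reverse, by rw [SimpleGraph.Walk.length_reverse, hw, Nat.dist_eq_sub_of_le_right h]⟩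

lemma walk_ge {m n : ℕ} : ∀ {x y : Fin m × Fin n}
    (w : (pathGraph m □ pathGraph n).Walk x y),
    Nat.dist x.1.val y.1.val + Nat.dist x.2.val y.2.val ≤ w.length := by
  intro x y w
  induction w with
  | nil => simp
  | @cons a b c hadj w ih =>
    rw [SimpleGraph.Walk.length_cons]
    rcases SimpleGraph.boxProd_adj.mp hadj with ⟨h1, h2⟩ | ⟨h1, h2⟩
    · have h2' : a.2.val = b.2.val := congrArg Fin.val h2
      rcases pathGraph_adj.mp h1 with h | h <;>
      · simp only [Nat.dist] at *; omega
    · have h2' : a.1.val = b.1.val := congrArg Fin.val h2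
      rcases pathGraph_adj.mp h1 with h | h <;>
      · simp only [Nat.dist] at *; omega

lemma box_dist {m n : ℕ} (hm : 0 < m) (hn : 0 < n) (x y : Fin m × Fin n) :
    (pathGraph m □ pathGraph n).dist x y
      = Nat.dist x.1.val y.1.val + Nat.dist x.2.val y.2.val := by
  have hconn : (pathGraph m □ pathGraph n).Connected := by
    obtain ⟨m', rfl⟩ : ∃ m', m = m' + 1 := ⟨m - 1, by omega⟩
    obtain ⟨n', rfl⟩ : ∃ n', n = n' + 1 := ⟨n - 1, by omega⟩
    exact (pathGraph_connected m').boxProd (pathGraph_connected n')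
  apply le_antisymm
  · obtain ⟨w1, hw1⟩ := pathWalk_exists m x.1 y.1
    obtain ⟨w2, hw2⟩ := pathWalk_exists n x.2 y.2
    have : ((w1.boxProdLeft (pathGraph n) x.2).append
        (w2.boxProdRight (pathGraph m) y.1)).length = _ := rfl
    calc (pathGraph m □ pathGraph n).dist x y
        ≤ ((w1.boxProdLeft (pathGraph n) x.2).append
            (w2.boxProdRight (pathGraph m) y.1)).length := SimpleGraph.dist_le _
      _ = _ := by
          rw [SimpleGraph.Walk.length_append]
          unfold SimpleGraph.Walk.boxProdLeft SimpleGraph.Walk.boxProdRight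
          exact congrArg₂ (· + ·) ((SimpleGraph.Walk.length_map _ w1).trans hw1)
            ((SimpleGraph.Walk.length_map _ w2).trans hw2)
  · obtain ⟨w, hw⟩ := hconn.exists_walk_length_eq_dist x y
    rw [← hw]
    exact walk_ge w
def tD : ℕ × ℕ → ℕ × ℕ → ℕ
  | (a, b), (x, y) => (a - x) + (x - a) + ((b - y) + (y - b))

def RF (m : ℕ) (c : ℕ × ℕ → Fin 4) : Prop :=
  ∀ x1 x2 y1 y2 z1 z2 : ℕ, x1 < 3 → x2 < m → y1 < 3 → y2 < m → z1 < 3 → z2 < m →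
    tD (x1,x2) (y1,y2) = tD (y1,y2) (z1,z2) →
    c (x1,x2) = c (y1,y2) ∨ c (y1,y2) = c (z1,z2) ∨ c (x1,x2) = c (z1,z2)

def ThreeCol (m : ℕ) (c : ℕ × ℕ → Fin 4) : Prop :=
  ∃ x y z : ℕ × ℕ, x.1 < 3 ∧ x.2 < m ∧ y.1 < 3 ∧ y.2 < m ∧ z.1 < 3 ∧ z.2 < m ∧
    c x ≠ c y ∧ c y ≠ c z ∧ c x ≠ c z

def Corner (m : ℕ) (c : ℕ × ℕ → Fin 4) : Prop :=
  ∃ p q r : Fin 4, p ≠ q ∧ p ≠ r ∧ q ≠ r ∧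
    ((c (0,0) = q ∧ c (2, m-1) = r ∧
        ∀ a b : ℕ, a < 3 → b < m → (a,b) ≠ (0,0) → (a,b) ≠ (2,m-1) → c (a,b) = p) ∨
     (c (2,0) = q ∧ c (0, m-1) = r ∧
        ∀ a b : ℕ, a < 3 → b < m → (a,b) ≠ (2,0) → (a,b) ≠ (0,m-1) → c (a,b) = p))

lemma fin4_resolve : ∀ p q r t : Fin 4, p ≠ q → p ≠ r → q ≠ r →
    (t = q ∨ q = r ∨ t = r) → (r = p ∨ p = t ∨ r = t) → (p = t ∨ t = q ∨ p = q) → False := by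
  decide

lemma stepA_L (m : ℕ) (hm : 3 ≤ m) (c : ℕ × ℕ → Fin 4) (hrf : RF m c)
    (hc : Corner (m-1) c) : False := by
  obtain ⟨p, q, r, hpq, hpr, hqr, hor⟩ := hc
  rcases hor with ⟨hq, hr, hall⟩ | ⟨hq, hr, hall⟩
  · rw [show m-1-1 = m-2 from by omega] at hr
    have hp1 : c (1, m-2) = p := hall 1 (m-2) (by omega) (by omega) (by intro h; injection h with h1 h2; omega) (by intro h; injection h with h1 h2; omega)
    have hp2 : c (2, 0) = p := hall 2 0 (by omega) (by omega) (by intro h; injection h with h1 h2; omega) (by intro h; injection h with h1 h2; omega)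
    have A1 := hrf 1 (m-1) 0 0 2 (m-2) (by omega) (by omega) (by omega) (by omega)
      (by omega) (by omega) (by simp only [tD]; try omega)
    have A2 := hrf 2 (m-2) 1 (m-2) 1 (m-1) (by omega) (by omega) (by omega) (by omega)
      (by omega) (by omega) (by simp only [tD]; try omega)
    have A3 := hrf 2 0 1 (m-1) 0 0 (by omega) (by omega) (by omega) (by omega)
      (by omega) (by omega) (by simp only [tD]; try omega)
    simp only [hq, hr, hp1, hp2] at A1 A2 A3
    exact fin4_resolve p q r _ hpq hpr hqr A1 A2 A3
  · rw [show m-1-1 = m-2 from by omega] at hr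
    have hp1 : c (1, m-2) = p := hall 1 (m-2) (by omega) (by omega) (by intro h; injection h with h1 h2; omega) (by intro h; injection h with h1 h2; omega)
    have hp2 : c (0, 0) = p := hall 0 0 (by omega) (by omega) (by intro h; injection h with h1 h2; omega) (by intro h; injection h with h1 h2; omega)
    have A1 := hrf 1 (m-1) 2 0 0 (m-2) (by omega) (by omega) (by omega) (by omega)
      (by omega) (by omega) (by simp only [tD]; try omega)
    have A2 := hrf 0 (m-2) 1 (m-2) 1 (m-1) (by omega) (by omega) (by omega) (by omega)
      (by omega) (by omega) (by simp only [tD]; try omega)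
    have A3 := hrf 0 0 1 (m-1) 2 0 (by omega) (by omega) (by omega) (by omega)
      (by omega) (by omega) (by simp only [tD]; try omega)
    simp only [hq, hr, hp1, hp2] at A1 A2 A3
    exact fin4_resolve p q r _ hpq hpr hqr A1 A2 A3

lemma stepA_R (m : ℕ) (hm : 3 ≤ m) (c : ℕ × ℕ → Fin 4) (hrf : RF m c)
    (hc : Corner (m-1) (fun x => c (x.1, x.2 + 1))) : False := by
  obtain ⟨p, q, r, hpq, hpr, hqr, hor⟩ := hc
  rcases hor with ⟨hq, hr, hall⟩ | ⟨hq, hr, hall⟩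
  · -- q at (0,1), r at (2,m-1)
    have hq' : c (0, 1) = q := hq
    have hr' : c (2, m-1) = r := by
      rw [show m-1-1 = m-2 from by omega] at hr
      have h2 : c (2, m-2+1) = r := hr
      rwa [show m-2+1 = m-1 from by omega] at h2
    have hp1 : c (1, 1) = p := hall 1 0 (by omega) (by omega) (by intro h; injection h with h1 h2; omega) (by intro h; injection h with h1 h2; omega)
    have hp2 : c (0, m-1) = p := by
      have h := hall 0 (m-2) (by omega) (by omega) (by intro h; injection h with h1 h2; omega) (by intro h; injection h with h1 h2; omega)
      have h2 : c (0, m-2+1) = p := h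
      rwa [show m-2+1 = m-1 from by omega] at h2
    have B1 := hrf 1 0 2 (m-1) 0 1 (by omega) (by omega) (by omega) (by omega)
      (by omega) (by omega) (by simp only [tD]; try omega)
    have B2 := hrf 0 1 1 1 1 0 (by omega) (by omega) (by omega) (by omega)
      (by omega) (by omega) (by simp only [tD]; try omega)
    have B3 := hrf 0 (m-1) 1 0 2 (m-1) (by omega) (by omega) (by omega) (by omega)
      (by omega) (by omega) (by simp only [tD]; try omega)
    simp only [hq', hr', hp1, hp2] at B1 B2 B3
    exact fin4_resolve p r q _ hpr hpq (fun h => hqr h.symm) B1 B2 B3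
  · -- q at (2,1), r at (0,m-1)
    have hq' : c (2, 1) = q := hq
    have hr' : c (0, m-1) = r := by
      rw [show m-1-1 = m-2 from by omega] at hr
      have h2 : c (0, m-2+1) = r := hr
      rwa [show m-2+1 = m-1 from by omega] at h2
    have hp1 : c (1, 1) = p := hall 1 0 (by omega) (by omega) (by intro h; injection h with h1 h2; omega) (by intro h; injection h with h1 h2; omega)
    have hp2 : c (2, m-1) = p := by
      have h := hall 2 (m-2) (by omega) (by omega) (by intro h; injection h with h1 h2; omega) (by intro h; injection h with h1 h2; omega)
      have h2 : c (2, m-2+1) = p := h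
      rwa [show m-2+1 = m-1 from by omega] at h2
    have B1 := hrf 1 0 0 (m-1) 2 1 (by omega) (by omega) (by omega) (by omega)
      (by omega) (by omega) (by simp only [tD]; try omega)
    have B2 := hrf 2 1 1 1 1 0 (by omega) (by omega) (by omega) (by omega)
      (by omega) (by omega) (by simp only [tD]; try omega)
    have B3 := hrf 2 (m-1) 1 0 0 (m-1) (by omega) (by omega) (by omega) (by omega)
      (by omega) (by omega) (by simp only [tD]; try omega)
    simp only [hq', hr', hp1, hp2] at B1 B2 B3
    exact fin4_resolve p r q _ hpr hpq (fun h => hqr h.symm) B1 B2 B3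
lemma pick3 {α : Type*} {u v x y z : α} (hxy : x ≠ y) (hyz : y ≠ z) (hxz : x ≠ z) :
    (x ≠ u ∧ x ≠ v) ∨ (y ≠ u ∧ y ≠ v) ∨ (z ≠ u ∧ z ≠ v) := by
  by_contra h
  push_neg at h
  obtain ⟨h1, h2, h3⟩ := h
  have hx : x = u ∨ x = v := by
    rcases eq_or_ne x u with h | h
    · exact .inl h
    · exact .inr (h1 h)
  have hy : y = u ∨ y = v := by
    rcases eq_or_ne y u with h | h
    · exact .inl h
    · exact .inr (h2 h)
  have hz : z = u ∨ z = v := by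
    rcases eq_or_ne z u with h | h
    · exact .inl h
    · exact .inr (h3 h)
  rcases hx with h4 | h4 <;> rcases hy with h5 | h5 <;> rcases hz with h6 | h6 <;>
    first
      | exact hxy (h4.trans h5.symm)
      | exact hyz (h5.trans h6.symm)
      | exact hxz (h4.trans h6.symm)

lemma inv_step (n : ℕ) (hn : 2 ≤ n)
    (ih : ∀ c : ℕ × ℕ → Fin 4, RF n c → ThreeCol n c → Corner n c)
    (c : ℕ × ℕ → Fin 4) (hrf : RF (n+1) c) (hthree : ThreeCol (n+1) c) :
    Corner (n+1) c := by
  have hrfL : RF n c := fun x1 x2 y1 y2 z1 z2 h1 h2 h3 h4 h5 h6 htd =>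
    hrf x1 x2 y1 y2 z1 z2 h1 (by omega) h3 (by omega) h5 (by omega) htd
  set cR : ℕ × ℕ → Fin 4 := fun x => c (x.1, x.2 + 1) with hcR
  have hrfR : RF n cR := by
    intro x1 x2 y1 y2 z1 z2 hb1 hb2 hb3 hb4 hb5 hb6 htd
    exact hrf x1 (x2+1) y1 (y2+1) z1 (z2+1) hb1 (by omega) hb3 (by omega) hb5 (by omega)
      (by simp only [tD] at htd ⊢; omega)
  have noL3 : ¬ ThreeCol n c := fun h3L =>
    stepA_L (n+1) (by omega) c hrf (ih c hrfL h3L)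
  have noR3 : ¬ ThreeCol n cR := fun h3R =>
    stepA_R (n+1) (by omega) c hrf (ih cR hrfR h3R)
  have hcR1 : ∀ a b : ℕ, 1 ≤ b → cR (a, b - 1) = c (a, b) := by
    intro a b hb
    show c (a, b - 1 + 1) = c (a, b)
    rw [show b - 1 + 1 = b from by omega]
  -- all middle cells share the same color
  have hmid : ∀ a b : ℕ, a < 3 → 1 ≤ b → b ≤ n - 1 → c (a, b) = c (1, 1) := by
    intro a b ha hb1 hb2
    by_contra hne
    obtain ⟨X, Y, Z, hX1, hX2, hY1, hY2, hZ1, hZ2, hXY, hYZ, hXZ⟩ := hthree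
    have pick : ∀ W : ℕ × ℕ, W.1 < 3 → W.2 < n + 1 →
        (c W ≠ c (a, b) ∧ c W ≠ c (1, 1)) → False := by
      rintro ⟨w1, w2⟩ hW1 hW2 ⟨hWu, hWv⟩
      rcases Nat.lt_or_ge w2 n with h | h
      · exact noL3 ⟨(a, b), (1, 1), (w1, w2), by omega, by omega, by omega, by omega, hW1, h,
          hne, fun hh => hWv hh.symm, fun hh => hWu hh.symm⟩
      · have hw2 : w2 = n := by omega
        rw [hw2] at hWu hWv
        refine noR3 ⟨(a, b - 1), (1, 0), (w1, n - 1), by omega, by omega, by omega, by omega,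
          by omega, by omega, ?_, ?_, ?_⟩
        · rw [hcR1 a b hb1]
          show c (a,b) ≠ cR (1, 0)
          exact hne
        · show cR (1,0) ≠ cR (w1, n-1)
          rw [hcR1 w1 n (by omega)]

          exact fun hh => hWv hh.symm
        · rw [hcR1 a b hb1, hcR1 w1 n (by omega)]
          exact fun hh => hWu hh.symm
    rcases pick3 (u := c (a,b)) (v := c (1,1)) hXY hYZ hXZ with ⟨w1, w2⟩ | ⟨w1, w2⟩ | ⟨w1, w2⟩
    · exact pick X hX1 hX2 ⟨w1, w2⟩
    · exact pick Y hY1 hY2 ⟨w1, w2⟩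
    · exact pick Z hZ1 hZ2 ⟨w1, w2⟩
  -- there are non-middle cells with the two extra colors, one in column 0, one in column n
  have hnotpp : ∃ aq ar : ℕ, aq < 3 ∧ ar < 3 ∧ c (aq, 0) ≠ c (1,1) ∧ c (ar, n) ≠ c (1,1) ∧
      c (aq, 0) ≠ c (ar, n) := by
    obtain ⟨X, Y, Z, hX1, hX2, hY1, hY2, hZ1, hZ2, hXY, hYZ, hXZ⟩ := hthree
    have huv : ∃ U V : ℕ × ℕ, U.1 < 3 ∧ U.2 < n+1 ∧ V.1 < 3 ∧ V.2 < n+1 ∧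
        c U ≠ c (1,1) ∧ c V ≠ c (1,1) ∧ c U ≠ c V := by
      by_cases hX : c X = c (1, 1)
      · exact ⟨Y, Z, hY1, hY2, hZ1, hZ2, fun h => hXY (hX.trans h.symm),
          fun h => hXZ (hX.trans h.symm), hYZ⟩
      · by_cases hY : c Y = c (1, 1)
        · exact ⟨X, Z, hX1, hX2, hZ1, hZ2, hX, fun h => hYZ (hY.trans h.symm), hXZ⟩
        · exact ⟨X, Y, hX1, hX2, hY1, hY2, hX, hY, hXY⟩
    obtain ⟨⟨u1, u2⟩, ⟨v1, v2⟩, hU1, hU2, hV1, hV2, hUp, hVp, hUV⟩ := huv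
    have hU0 : u2 = 0 ∨ u2 = n := by
      by_contra h
      push_neg at h
      exact hUp (hmid u1 u2 hU1 (by omega) (by omega))
    have hV0 : v2 = 0 ∨ v2 = n := by
      by_contra h
      push_neg at h
      exact hVp (hmid v1 v2 hV1 (by omega) (by omega))
    rcases hU0 with rfl | hu <;> rcases hV0 with rfl | hv
    · exact absurd ⟨(u1, 0), (v1, 0), (1, 1), hU1, by omega, hV1, by omega, by omega, by omega,
        hUV, hVp, hUp⟩ noL3
    · rw [hv] at hVp hUV
      exact ⟨u1, v1, hU1, hV1, hUp, hVp, hUV⟩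
    · rw [hu] at hUp hUV
      exact ⟨v1, u1, hV1, hU1, hVp, hUp, fun h => hUV h.symm⟩
    · rw [hu] at hUp hUV
      rw [hv] at hVp hUV
      refine absurd ⟨(u1, n-1), (v1, n-1), (1, 0), hU1, by omega, hV1, by omega, by omega,
        by omega, ?_, ?_, ?_⟩ noR3
      · rw [hcR1 u1 n (by omega), hcR1 v1 n (by omega)]
        exact hUV
      · rw [hcR1 v1 n (by omega)]
        exact hVp
      · rw [hcR1 u1 n (by omega)]
        exact hUp
  obtain ⟨aq, ar, haq, har, hqp, hrp, hqr⟩ := hnotpp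
  -- column 0 is colored with c (1,1) or c (aq, 0); column n with c (1,1) or c (ar, n)
  have hcol0 : ∀ a : ℕ, a < 3 → c (a, 0) = c (1, 1) ∨ c (a, 0) = c (aq, 0) := by
    intro a ha
    by_contra h
    push_neg at h
    exact noL3 ⟨(a, 0), (aq, 0), (1, 1), ha, by omega, haq, by omega, by omega, by omega,
      h.2, hqp, h.1⟩
  have hcoln : ∀ a : ℕ, a < 3 → c (a, n) = c (1, 1) ∨ c (a, n) = c (ar, n) := by
    intro a ha
    by_contra h
    push_neg at h
    refine noR3 ⟨(a, n-1), (ar, n-1), (1, 0), ha, by omega, har, by omega, by omega, by omega,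
      ?_, ?_, ?_⟩
    · rw [hcR1 a n (by omega), hcR1 ar n (by omega)]
      exact h.2
    · rw [hcR1 ar n (by omega)]
      exact hrp
    · rw [hcR1 a n (by omega)]
      exact h.1
  -- the middle cells of the end columns have the majority color
  have h10 : c (1, 0) = c (1, 1) := by
    rcases hcol0 1 (by omega) with h | h
    · exact h
    · exfalso
      interval_cases ar
      · have A := hrf 2 1 0 n 1 0 (by omega) (by omega) (by omega) (by omega) (by omega)
          (by omega) (by simp only [tD]; try omega)
        rw [hmid 2 1 (by omega) (by omega) (by omega), h] at A
        rcases A with hA | hA | hA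
        · exact hrp hA.symm
        · exact hqr hA.symm
        · exact hqp hA.symm
      · have A := hrf 0 (n-1) 1 0 1 n (by omega) (by omega) (by omega) (by omega) (by omega)
          (by omega) (by simp only [tD]; try omega)
        rw [hmid 0 (n-1) (by omega) (by omega) (by omega), h] at A
        rcases A with hA | hA | hA
        · exact hqp hA.symm
        · exact hqr hA
        · exact hrp hA.symm
      · have A := hrf 0 1 2 n 1 0 (by omega) (by omega) (by omega) (by omega) (by omega)
          (by omega) (by simp only [tD]; try omega)
        rw [hmid 0 1 (by omega) (by omega) (by omega), h] at A
        rcases A with hA | hA | hA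
        · exact hrp hA.symm
        · exact hqr hA.symm
        · exact hqp hA.symm
  have h1n : c (1, n) = c (1, 1) := by
    rcases hcoln 1 (by omega) with h | h
    · exact h
    · exfalso
      have haq' : aq ≠ 1 := by
        intro hh
        subst hh
        exact hqp h10
      interval_cases aq
      · have A := hrf 2 (n-1) 0 0 1 n (by omega) (by omega) (by omega) (by omega) (by omega)
          (by omega) (by simp only [tD]; try omega)
        rw [hmid 2 (n-1) (by omega) (by omega) (by omega), h] at A
        rcases A with hA | hA | hA
        · exact hqp hA.symm
        · exact hqr hA
        · exact hrp hA.symm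
      · exact haq' rfl
      · have A := hrf 0 (n-1) 2 0 1 n (by omega) (by omega) (by omega) (by omega) (by omega)
          (by omega) (by simp only [tD]; try omega)
        rw [hmid 0 (n-1) (by omega) (by omega) (by omega), h] at A
        rcases A with hA | hA | hA
        · exact hqp hA.symm
        · exact hqr hA
        · exact hrp hA.symm
  -- incompatible same-row corners
  have notI : ¬ (c (0, 0) = c (aq, 0) ∧ c (0, n) = c (ar, n)) := by
    rintro ⟨h1, h2⟩
    have A := hrf 1 (n-1) 0 0 0 n (by omega) (by omega) (by omega) (by omega) (by omega)
      (by omega) (by simp only [tD]; try omega)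
    rw [hmid 1 (n-1) (by omega) (by omega) (by omega), h1, h2] at A
    rcases A with hA | hA | hA
    · exact hqp hA.symm
    · exact hqr hA
    · exact hrp hA.symm
  have notII : ¬ (c (2, 0) = c (aq, 0) ∧ c (2, n) = c (ar, n)) := by
    rintro ⟨h1, h2⟩
    have A := hrf 1 (n-1) 2 0 2 n (by omega) (by omega) (by omega) (by omega) (by omega)
      (by omega) (by simp only [tD]; try omega)
    rw [hmid 1 (n-1) (by omega) (by omega) (by omega), h1, h2] at A
    rcases A with hA | hA | hA
    · exact hqp hA.symm
    · exact hqr hA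
    · exact hrp hA.symm
  have har' : ar ≠ 1 := by
    intro hh
    subst hh
    exact hrp h1n
  have haq' : aq ≠ 1 := by
    intro hh
    subst hh
    exact hqp h10
  -- assemble the corner form
  refine ⟨c (1,1), c (aq, 0), c (ar, n), fun h => hqp h.symm, fun h => hrp h.symm, hqr, ?_⟩
  have hfill : ∀ a b : ℕ, a < 3 → b < n + 1 → 1 ≤ b → b ≤ n - 1 → c (a, b) = c (1,1) :=
    fun a b ha _ h1 h2 => hmid a b ha h1 h2
  interval_cases aq
  · -- q at (0,0)
    have harr : ar = 2 := by
      rcases (show ar = 0 ∨ ar = 1 ∨ ar = 2 from by omega) with h | h | h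
      · exfalso; apply notI; refine ⟨rfl, ?_⟩; rw [h]
      · exact absurd h har'
      · exact h
    subst harr
    left
    refine ⟨rfl, by rw [show n + 1 - 1 = n from by omega], ?_⟩
    intro a b ha hb hne1 hne2
    rw [show n + 1 - 1 = n from by omega] at hne2
    have h20 : c (2, 0) = c (1, 1) := by
      rcases hcol0 2 (by omega) with h | h
      · exact h
      · exact absurd ⟨h, rfl⟩ notII
    have h0n : c (0, n) = c (1, 1) := by
      rcases hcoln 0 (by omega) with h | h
      · exact h
      · exact absurd ⟨rfl, h⟩ notI
    rcases Nat.eq_zero_or_pos b with rfl | hbpos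
    · interval_cases a
      · exact absurd rfl hne1
      · exact h10
      · exact h20
    · rcases eq_or_ne b n with rfl | hbn
      · interval_cases a
        · exact h0n
        · exact h1n
        · exact absurd rfl hne2
      · exact hmid a b ha (by omega) (by omega)
  · exact absurd rfl haq'
  · -- q at (2,0)
    have harr : ar = 0 := by
      rcases (show ar = 0 ∨ ar = 1 ∨ ar = 2 from by omega) with h | h | h
      · exact h
      · exact absurd h har'
      · exfalso; apply notII; refine ⟨rfl, ?_⟩; rw [h]
    subst harr
    right
    refine ⟨rfl, by rw [show n + 1 - 1 = n from by omega], ?_⟩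
    intro a b ha hb hne1 hne2
    rw [show n + 1 - 1 = n from by omega] at hne2
    have h00 : c (0, 0) = c (1, 1) := by
      rcases hcol0 0 (by omega) with h | h
      · exact h
      · exact absurd ⟨h, rfl⟩ notI
    have h2n : c (2, n) = c (1, 1) := by
      rcases hcoln 2 (by omega) with h | h
      · exact h
      · exact absurd ⟨rfl, h⟩ notII
    rcases Nat.eq_zero_or_pos b with rfl | hbpos
    · interval_cases a
      · exact h00
      · exact h10
      · exact absurd rfl hne1
    · rcases eq_or_ne b n with rfl | hbn
      · interval_cases a
        · exact absurd rfl hne2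
        · exact h1n
        · exact h2n
      · exact hmid a b ha (by omega) (by omega)
set_option maxRecDepth 8000 in
set_option synthInstance.maxHeartbeats 1000000 in
set_option synthInstance.maxSize 4000 in
set_option maxHeartbeats 2000000 in
lemma base_core (c00 c01 c10 c11 c20 c21 : Fin 4)
    (h0 : c01 = c00 ∨ c00 = c10 ∨ c01 = c10)
    (h1 : c11 = c00 ∨ c00 = c20 ∨ c11 = c20)
    (h2 : c00 = c01 ∨ c01 = c11 ∨ c00 = c11)
    (h3 : c10 = c01 ∨ c01 = c21 ∨ c10 = c21)
    (h4 : c00 = c10 ∨ c10 = c11 ∨ c00 = c11)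
    (h5 : c00 = c10 ∨ c10 = c20 ∨ c00 = c20)
    (h6 : c01 = c10 ∨ c10 = c21 ∨ c01 = c21)
    (h7 : c11 = c10 ∨ c10 = c20 ∨ c11 = c20)
    (h8 : c00 = c11 ∨ c11 = c20 ∨ c00 = c20)
    (h9 : c01 = c11 ∨ c11 = c10 ∨ c01 = c10)
    (h10 : c01 = c11 ∨ c11 = c21 ∨ c01 = c21)
    (h11 : c10 = c11 ∨ c11 = c21 ∨ c10 = c21)
    (h12 : c00 = c20 ∨ c20 = c11 ∨ c00 = c11)
    (h13 : c10 = c20 ∨ c20 = c21 ∨ c10 = c21)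
    (h14 : c01 = c21 ∨ c21 = c10 ∨ c01 = c10)
    (h15 : c11 = c21 ∨ c21 = c20 ∨ c11 = c20) :
    (∃ p q : Fin 4, (c00 = p ∨ c00 = q) ∧ (c01 = p ∨ c01 = q) ∧ (c10 = p ∨ c10 = q) ∧
      (c11 = p ∨ c11 = q) ∧ (c20 = p ∨ c20 = q) ∧ (c21 = p ∨ c21 = q)) ∨
    (∃ p q r : Fin 4, p ≠ q ∧ p ≠ r ∧ q ≠ r ∧
      ((c00 = q ∧ c21 = r ∧ c01 = p ∧ c10 = p ∧ c11 = p ∧ c20 = p) ∨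
       (c20 = q ∧ c01 = r ∧ c00 = p ∧ c10 = p ∧ c11 = p ∧ c21 = p))) := by
  revert h0 h1 h2 h3 h4 h5 h6 h7 h8 h9 h10 h11 h12 h13 h14 h15
  revert c00 c01 c10 c11 c20 c21
  decide

set_option maxHeartbeats 2000000 in
lemma base2 (c : ℕ × ℕ → Fin 4) (hrf : RF 2 c) (h3 : ThreeCol 2 c) : Corner 2 c := by
  have h0 := hrf 0 1 0 0 1 0 (by omega) (by omega) (by omega) (by omega) (by omega) (by omega) (by norm_num [tD])
  have h1 := hrf 1 1 0 0 2 0 (by omega) (by omega) (by omega) (by omega) (by omega) (by omega) (by norm_num [tD])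
  have h2 := hrf 0 0 0 1 1 1 (by omega) (by omega) (by omega) (by omega) (by omega) (by omega) (by norm_num [tD])
  have h3' := hrf 1 0 0 1 2 1 (by omega) (by omega) (by omega) (by omega) (by omega) (by omega) (by norm_num [tD])
  have h4 := hrf 0 0 1 0 1 1 (by omega) (by omega) (by omega) (by omega) (by omega) (by omega) (by norm_num [tD])
  have h5 := hrf 0 0 1 0 2 0 (by omega) (by omega) (by omega) (by omega) (by omega) (by omega) (by norm_num [tD])
  have h6 := hrf 0 1 1 0 2 1 (by omega) (by omega) (by omega) (by omega) (by omega) (by omega) (by norm_num [tD])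
  have h7 := hrf 1 1 1 0 2 0 (by omega) (by omega) (by omega) (by omega) (by omega) (by omega) (by norm_num [tD])
  have h8 := hrf 0 0 1 1 2 0 (by omega) (by omega) (by omega) (by omega) (by omega) (by omega) (by norm_num [tD])
  have h9 := hrf 0 1 1 1 1 0 (by omega) (by omega) (by omega) (by omega) (by omega) (by omega) (by norm_num [tD])
  have h10 := hrf 0 1 1 1 2 1 (by omega) (by omega) (by omega) (by omega) (by omega) (by omega) (by norm_num [tD])
  have h11 := hrf 1 0 1 1 2 1 (by omega) (by omega) (by omega) (by omega) (by omega) (by omega) (by norm_num [tD])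
  have h12 := hrf 0 0 2 0 1 1 (by omega) (by omega) (by omega) (by omega) (by omega) (by omega) (by norm_num [tD])
  have h13 := hrf 1 0 2 0 2 1 (by omega) (by omega) (by omega) (by omega) (by omega) (by omega) (by norm_num [tD])
  have h14 := hrf 0 1 2 1 1 0 (by omega) (by omega) (by omega) (by omega) (by omega) (by omega) (by norm_num [tD])
  have h15 := hrf 1 1 2 1 2 0 (by omega) (by omega) (by omega) (by omega) (by omega) (by omega) (by norm_num [tD])
  have mem : ∀ w : ℕ × ℕ, w.1 < 3 → w.2 < 2 →
      c w = c (0,0) ∨ c w = c (0,1) ∨ c w = c (1,0) ∨ c w = c (1,1) ∨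
      c w = c (2,0) ∨ c w = c (2,1) := by
    rintro ⟨a, b⟩ ha hb
    interval_cases a <;> interval_cases b <;>
      first
        | exact Or.inl rfl
        | exact Or.inr (Or.inl rfl)
        | exact Or.inr (Or.inr (Or.inl rfl))
        | exact Or.inr (Or.inr (Or.inr (Or.inl rfl)))
        | exact Or.inr (Or.inr (Or.inr (Or.inr (Or.inl rfl))))
        | exact Or.inr (Or.inr (Or.inr (Or.inr (Or.inr rfl))))
  rcases base_core (c (0,0)) (c (0,1)) (c (1,0)) (c (1,1)) (c (2,0)) (c (2,1))
    h0 h1 h2 h3' h4 h5 h6 h7 h8 h9 h10 h11 h12 h13 h14 h15 with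
    ⟨p, q, m1, m2, m3, m4, m5, m6⟩ | ⟨p, q, r, hpq, hpr, hqr, hor⟩
  · exfalso
    obtain ⟨X, Y, Z, hX1, hX2, hY1, hY2, hZ1, hZ2, hXY, hYZ, hXZ⟩ := h3
    have hX : c X = p ∨ c X = q := by rcases mem X hX1 hX2 with h|h|h|h|h|h <;> rw [h] <;> tauto
    have hY : c Y = p ∨ c Y = q := by rcases mem Y hY1 hY2 with h|h|h|h|h|h <;> rw [h] <;> tauto
    have hZ : c Z = p ∨ c Z = q := by rcases mem Z hZ1 hZ2 with h|h|h|h|h|h <;> rw [h] <;> tauto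
    rcases hX with h|h <;> rcases hY with h'|h' <;> rcases hZ with h''|h'' <;> simp_all
  · clear h0 h1 h2 h3' h4 h5 h6 h7 h8 h9 h10 h11 h12 h13 h14 h15 mem h3
    refine ⟨p, q, r, hpq, hpr, hqr, ?_⟩
    rcases hor with ⟨e1, e2, e3, e4, e5, e6⟩ | ⟨e1, e2, e3, e4, e5, e6⟩
    · left
      refine ⟨e1, by norm_num; exact e2, ?_⟩
      intro a b ha hb hne1 hne2
      interval_cases a <;> interval_cases b <;>
        first
          | exact e3 | exact e4 | exact e5 | exact e6
          | exact absurd rfl hne1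
          | (exfalso; apply hne2; norm_num)
    · right
      refine ⟨e1, by norm_num; exact e2, ?_⟩
      intro a b ha hb hne1 hne2
      interval_cases a <;> interval_cases b <;>
        first
          | exact e3 | exact e4 | exact e5 | exact e6
          | exact absurd rfl hne1
          | (exfalso; apply hne2; norm_num)

lemma inv (m : ℕ) (hm : 2 ≤ m) : ∀ c : ℕ × ℕ → Fin 4, RF m c → ThreeCol m c → Corner m c := by
  induction m, hm using Nat.le_induction with
  | base => exact base2
  | succ n hn ih => exact inv_step n hn ih


lemma upper (m : ℕ) (hm : 2 ≤ m) (c : Fin 3 × Fin m → Fin 4)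
    (hsurj : Function.Surjective c) : HasRainbowAP (pathGraph 3 □ pathGraph m) 3 c := by
  by_contra hno
  classical
  set ch : ℕ × ℕ → Fin 4 := fun x =>
    if h : x.1 < 3 ∧ x.2 < m then c (⟨x.1, h.1⟩, ⟨x.2, h.2⟩)
    else c (⟨0, by omega⟩, ⟨0, by omega⟩) with hchdef
  have hch : ∀ (a b : ℕ) (ha : a < 3) (hb : b < m), ch (a, b) = c (⟨a, ha⟩, ⟨b, hb⟩) := by
    intro a b ha hb
    simp only [hchdef]
    rw [dif_pos ⟨ha, hb⟩]
  have cheta : ∀ x : Fin 3 × Fin m, ch (x.1.val, x.2.val) = c x := by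
    intro x
    rw [hch x.1.val x.2.val x.1.isLt x.2.isLt]
  have hrf : RF m ch := by
    intro x1 x2 y1 y2 z1 z2 h1 h2 h3 h4 h5 h6 htd
    by_contra hcol
    push_neg at hcol
    obtain ⟨hc1, hc2, hc3⟩ := hcol
    rw [hch x1 x2 h1 h2, hch y1 y2 h3 h4] at hc1
    rw [hch y1 y2 h3 h4, hch z1 z2 h5 h6] at hc2
    rw [hch x1 x2 h1 h2, hch z1 z2 h5 h6] at hc3
    apply hno
    set X : Fin 3 × Fin m := (⟨x1, h1⟩, ⟨x2, h2⟩)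
    set Y : Fin 3 × Fin m := (⟨y1, h3⟩, ⟨y2, h4⟩)
    set Z : Fin 3 × Fin m := (⟨z1, h5⟩, ⟨z2, h6⟩)
    refine ⟨![X, Y, Z], ⟨(pathGraph 3 □ pathGraph m).dist X Y, ?_⟩, ?_⟩
    · intro i hi
      rcases (show i = 0 ∨ i = 1 from by omega) with rfl | rfl
      · rfl
      · show (pathGraph 3 □ pathGraph m).dist Y Z = (pathGraph 3 □ pathGraph m).dist X Y
        rw [box_dist (by omega) (by omega), box_dist (by omega) (by omega)]
        simp only [tD] at htd
        simp only [Nat.dist, X, Y, Z, Fin.val_mk]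
        omega
    · intro i j hij
      fin_cases i <;> fin_cases j <;>
        first
          | rfl
          | (exfalso
             simp only [Function.comp, Matrix.cons_val_zero, Matrix.cons_val_one,
               Matrix.head_cons, Matrix.cons_val_two, Matrix.tail_cons] at hij
             first
               | exact hc1 hij | exact hc2 hij | exact hc3 hij
               | exact hc1 hij.symm | exact hc2 hij.symm | exact hc3 hij.symm)
  have h3 : ThreeCol m ch := by
    obtain ⟨a0, ha0⟩ := hsurj 0
    obtain ⟨a1, ha1⟩ := hsurj 1
    obtain ⟨a2, ha2⟩ := hsurj 2
    refine ⟨(a0.1.val, a0.2.val), (a1.1.val, a1.2.val), (a2.1.val, a2.2.val),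
      a0.1.isLt, a0.2.isLt, a1.1.isLt, a1.2.isLt, a2.1.isLt, a2.2.isLt, ?_, ?_, ?_⟩
    · rw [cheta, cheta, ha0, ha1]; decide
    · rw [cheta, cheta, ha1, ha2]; decide
    · rw [cheta, cheta, ha0, ha2]; decide
  have hcor := inv m hm ch hrf h3
  obtain ⟨p, q, r, hpq, hpr, hqr, hor⟩ := hcor
  have hcover : ∀ i : Fin 4, i = p ∨ i = q ∨ i = r := by
    intro i
    obtain ⟨x, hx⟩ := hsurj i
    have hx' : ch (x.1.val, x.2.val) = i := by rw [cheta x]; exact hx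
    rcases hor with ⟨hq', hr', hall⟩ | ⟨hq', hr', hall⟩
    · by_cases h1 : ((x.1.val : ℕ), (x.2.val : ℕ)) = ((0 : ℕ), (0 : ℕ))
      · right; left; rw [← hx', h1, hq']
      · by_cases h2 : ((x.1.val : ℕ), (x.2.val : ℕ)) = ((2 : ℕ), m - 1)
        · right; right; rw [← hx', h2, hr']
        · left; rw [← hx', hall x.1.val x.2.val x.1.isLt x.2.isLt h1 h2]
    · by_cases h1 : ((x.1.val : ℕ), (x.2.val : ℕ)) = ((2 : ℕ), (0 : ℕ))
      · right; left; rw [← hx', h1, hq']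
      · by_cases h2 : ((x.1.val : ℕ), (x.2.val : ℕ)) = ((0 : ℕ), m - 1)
        · right; right; rw [← hx', h2, hr']
        · left; rw [← hx', hall x.1.val x.2.val x.1.isLt x.2.isLt h1 h2]
  obtain ⟨s, hs1, hs2, hs3⟩ : ∃ s : Fin 4, s ≠ p ∧ s ≠ q ∧ s ≠ r := by
    revert hpq
    have : ∀ p q r : Fin 4, ∃ s : Fin 4, s ≠ p ∧ s ≠ q ∧ s ≠ r := by decide
    intro _
    exact this p q r
  rcases hcover s with h | h | h
  · exact hs1 h
  · exact hs2 h
  · exact hs3 h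

lemma fin3_cover (a b c : Fin 3) (hab : a ≠ b) (hbc : b ≠ c) (hac : a ≠ c) :
    (a = 1 ∨ b = 1 ∨ c = 1) ∧ (a = 2 ∨ b = 2 ∨ c = 2) := by
  revert hab hbc hac
  revert a b c
  decide

lemma lower3 (m : ℕ) (hm : 2 ≤ m) (heven : m % 2 = 0) :
    ∃ c : Fin 3 × Fin m → Fin 3, Function.Surjective c ∧
      ¬ HasRainbowAP (pathGraph 3 □ pathGraph m) 3 c := by
  set A : Fin 3 × Fin m := (⟨0, by omega⟩, ⟨0, by omega⟩) with hA
  set B : Fin 3 × Fin m := (⟨2, by omega⟩, ⟨m - 1, by omega⟩) with hB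
  have hAB : A ≠ B := by
    simp only [hA, hB, ne_eq, Prod.mk.injEq, not_and]
    intro h
    exact absurd (congrArg Fin.val h) (by simp)
  classical
  set c : Fin 3 × Fin m → Fin 3 := fun w => if w = A then 1 else if w = B then 2 else 0
    with hc
  have hcA : c A = 1 := by simp [hc]
  have hcB : c B = 2 := by simp [hc, hAB.symm]
  have hclass : ∀ w : Fin 3 × Fin m, (c w = 1 → w = A) ∧ (c w = 2 → w = B) := by
    intro w
    simp only [hc]
    split_ifs with h1 h2'
    · exact ⟨fun _ => h1, fun h => absurd h (by decide)⟩
    · exact ⟨fun h => absurd h (by decide), fun _ => h2'⟩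
    · exact ⟨fun h => absurd h (by decide), fun h => absurd h (by decide)⟩
  refine ⟨c, ?_, ?_⟩
  · intro i
    fin_cases i
    · refine ⟨(⟨0, by omega⟩, ⟨1, by omega⟩), ?_⟩
      have hne1 : ((⟨0, by omega⟩, ⟨1, by omega⟩) : Fin 3 × Fin m) ≠ A := by
        simp only [hA, ne_eq, Prod.mk.injEq, not_and]
        intro _
        exact fun h => absurd (congrArg Fin.val h) (by simp)
      have hne2 : ((⟨0, by omega⟩, ⟨1, by omega⟩) : Fin 3 × Fin m) ≠ B := by
        simp only [hB, ne_eq, Prod.mk.injEq, not_and]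
        intro h
        exact absurd (congrArg Fin.val h) (by simp)
      show c _ = _
      rw [hc]
      show (if _ = A then _ else _) = _
      rw [if_neg hne1, if_neg hne2]
      rfl
    · exact ⟨A, hcA⟩
    · exact ⟨B, hcB⟩
  · rintro ⟨v, ⟨d, hap⟩, hinj⟩
    have h01 : (pathGraph 3 □ pathGraph m).dist (v 0) (v 1) = d := hap 0 (by omega)
    have h12 : (pathGraph 3 □ pathGraph m).dist (v 1) (v 2) = d := hap 1 (by omega)
    have hd01 : c (v 0) ≠ c (v 1) := fun h => by
      have := hinj (a₁ := 0) (a₂ := 1) h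
      exact absurd (congrArg Fin.val this) (by simp)
    have hd12 : c (v 1) ≠ c (v 2) := fun h => by
      have := hinj (a₁ := 1) (a₂ := 2) h
      exact absurd (congrArg Fin.val this) (by simp)
    have hd02 : c (v 0) ≠ c (v 2) := fun h => by
      have := hinj (a₁ := 0) (a₂ := 2) h
      exact absurd (congrArg Fin.val this) (by simp)
    obtain ⟨hone, htwo⟩ := fin3_cover _ _ _ hd01 hd12 hd02
    have hvA : ∀ i : Fin 3, c (v i) = 1 → v i = A := fun i => (hclass (v i)).1
    have hvB : ∀ i : Fin 3, c (v i) = 2 → v i = B := fun i => (hclass (v i)).2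
    have hdist : ∀ x y : Fin 3 × Fin m, (pathGraph 3 □ pathGraph m).dist x y =
        Nat.dist x.1.val y.1.val + Nat.dist x.2.val y.2.val :=
      fun x y => box_dist (by omega) (by omega) x y
    rw [hdist] at h01 h12
    clear hap hinj
    rcases hone with h1 | h1 | h1 <;> rcases htwo with h2 | h2 | h2
    · rw [h1] at h2; exact absurd h2 (by decide)
    · -- A at 0, B at 1, W = v 2
      have eA := hvA _ h1
      have eB := hvB _ h2
      have hWA : v 2 ≠ A := fun h => hd02 (by rw [h1, h, hcA])
      have hWB : v 2 ≠ B := fun h => hd12 (by rw [h2, h, hcB])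
      rw [eA, eB] at h01
      rw [eB] at h12
      rw [hA] at hWA
      rw [hB] at hWB
      simp only [ne_eq, Prod.ext_iff, Fin.ext_iff, not_and] at hWA hWB
      have hb1 := (v 2).1.isLt
      have hb2 := (v 2).2.isLt
      simp only [hA, hB, Nat.dist] at h01 h12
      omega
    · -- A at 0, B at 2, W = v 1  (parity)
      have eA := hvA _ h1
      have eB := hvB _ h2
      rw [eA] at h01
      rw [eB] at h12
      have hb1 := (v 1).1.isLt
      have hb2 := (v 1).2.isLt
      simp only [hA, hB, Nat.dist] at h01 h12
      omega
    · -- A at 1, B at 0, W = v 2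
      have eA := hvA _ h1
      have eB := hvB _ h2
      have hWB : v 2 ≠ B := fun h => hd02 (by rw [h2, h, hcB])
      rw [eA, eB] at h01
      rw [eA] at h12
      rw [hB] at hWB
      simp only [ne_eq, Prod.ext_iff, Fin.ext_iff, not_and] at hWB
      have hb1 := (v 2).1.isLt
      have hb2 := (v 2).2.isLt
      simp only [hA, hB, Nat.dist] at h01 h12
      omega
    · rw [h1] at h2; exact absurd h2 (by decide)
    · -- A at 1, B at 2, W = v 0
      have eA := hvA _ h1
      have eB := hvB _ h2
      have hWB : v 0 ≠ B := fun h => hd02 (by rw [h2, h, hcB])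
      rw [eA] at h01
      rw [eA, eB] at h12
      rw [hB] at hWB
      simp only [ne_eq, Prod.ext_iff, Fin.ext_iff, not_and] at hWB
      have hb1 := (v 0).1.isLt
      have hb2 := (v 0).2.isLt
      simp only [hA, hB, Nat.dist] at h01 h12
      omega
    · -- A at 2, B at 0, W = v 1 (parity)
      have eA := hvA _ h1
      have eB := hvB _ h2
      rw [eB] at h01
      rw [eA] at h12
      have hb1 := (v 1).1.isLt
      have hb2 := (v 1).2.isLt
      simp only [hA, hB, Nat.dist] at h01 h12
      omega
    · -- A at 2, B at 1, W = v 0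
      have eA := hvA _ h1
      have eB := hvB _ h2
      have hWA : v 0 ≠ A := fun h => hd02 (by rw [h1, h, hcA])
      rw [eB] at h01
      rw [eB, eA] at h12
      rw [hA] at hWA
      simp only [ne_eq, Prod.ext_iff, Fin.ext_iff, not_and] at hWA
      have hb1 := (v 0).1.isLt
      have hb2 := (v 0).2.isLt
      simp only [hA, hB, Nat.dist] at h01 h12
      omega
    · rw [h1] at h2; exact absurd h2 (by decide)


/-- for every `k ≥ 1`, `aw(P_3 □ P_{2k}, 3) = 4`. -/
theorem aw_p3_peven (k : ℕ) (hk : 1 ≤ k) :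
    aw (pathGraph 3 □ pathGraph (2 * k)) 3 = 4 := by
  have hm : 2 ≤ 2 * k := by omega
  have hmem : (4 : ℕ) ∈ {r : ℕ | 0 < r ∧ ∀ c : Fin 3 × Fin (2*k) → Fin r,
      Function.Surjective c → HasRainbowAP (pathGraph 3 □ pathGraph (2*k)) 3 c} :=
    ⟨by norm_num, fun c hc => upper (2*k) hm c hc⟩
  unfold aw
  apply le_antisymm
  · exact Nat.sInf_le hmem
  · apply le_csInf ⟨4, hmem⟩
    rintro b ⟨hb0, hball⟩
    by_contra hlt
    push_neg at hlt
    interval_cases b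
    · obtain ⟨v, -, hinj⟩ := hball (fun _ => 0)
        (fun i => ⟨(⟨0, by omega⟩, ⟨0, by omega⟩), Fin.ext (by omega)⟩)
      have hcard := Fintype.card_le_of_injective _ hinj
      simp [Fintype.card_fin] at hcard
    · classical
      have hsurj2 : Function.Surjective (fun w : Fin 3 × Fin (2*k) =>
          if w = ((⟨0, by omega⟩ : Fin 3), (⟨0, by omega⟩ : Fin (2*k))) then (1 : Fin 2)
          else 0) := by
        intro i
        fin_cases i
        · refine ⟨(⟨1, by omega⟩, ⟨0, by omega⟩), ?_⟩
          have hne : ((⟨1, by omega⟩, ⟨0, by omega⟩) : Fin 3 × Fin (2*k)) ≠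
              ((⟨0, by omega⟩ : Fin 3), (⟨0, by omega⟩ : Fin (2*k))) := by
            simp only [ne_eq, Prod.mk.injEq, not_and]
            intro h
            exact absurd (congrArg Fin.val h) (by simp)
          simp only
          rw [if_neg hne]
          rfl
        · exact ⟨_, if_pos rfl⟩
      obtain ⟨v, -, hinj⟩ := hball _ hsurj2
      have hcard := Fintype.card_le_of_injective _ hinj
      simp [Fintype.card_fin] at hcard
    · obtain ⟨c3, hsurj, hno⟩ := lower3 (2*k) hm (by omega)
      exact hno (hball c3 hsurj)
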